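/- Let N ≥ 1 be an integer. In the quaternion algebra (1,−1/ℚ), the ℤ-submodule O_M(1,N) spanned by the four elements 1, (J+K)/2, N·(−J+K)/2, and (1−I)/2 is closed under multiplication and contains 1, hence is a subring; moreover it is a free ℤ-module of rank 4 whose ℚ-span is all of (1,−1/ℚ) (i.e. it is an order of (1,−1/ℚ)). -/

import Mathlib

set_option maxHeartbeats 1000000

open Quaternion

/-- For `N ≥ 1`, the `ℤ`-submodule of the quaternion algebra `(1,−1/ℚ)`
spanned by `1`, `(J+K)/2`, `N·(−J+K)/2` and `(1−I)/2` contains `1`, is closed under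
multiplication, and is a free `ℤ`-module of rank `4` whose `ℚ`-span is the whole algebra
(i.e. it is an order of `(1,−1/ℚ)`). -/
theorem eichler_order_split_quaternions (N : ℕ) (hN : 1 ≤ N) :
    ∀ M : Submodule ℤ ℍ[ℚ, 1, -1],
      M = Submodule.span ℤ
        ({1, ⟨0, 0, 1/2, 1/2⟩, ⟨0, 0, -(N : ℚ)/2, (N : ℚ)/2⟩, ⟨1/2, -(1/2), 0, 0⟩} :
          Set ℍ[ℚ, 1, -1]) →
      (1 : ℍ[ℚ, 1, -1]) ∈ M ∧
      (∀ x ∈ M, ∀ y ∈ M, x * y ∈ M) ∧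
      Module.Free ℤ M ∧ Module.finrank ℤ M = 4 ∧
      Submodule.span ℚ (M : Set ℍ[ℚ, 1, -1]) = ⊤ := by
  intro M hM
  have hNQ : (N : ℚ) ≠ 0 := by
    exact Nat.cast_ne_zero.mpr (by omega)
  set e1 : ℍ[ℚ,1,-1] := ⟨0, 0, 1/2, 1/2⟩ with he1
  set e2 : ℍ[ℚ,1,-1] := ⟨0, 0, -(N : ℚ)/2, (N : ℚ)/2⟩ with he2
  set e3 : ℍ[ℚ,1,-1] := ⟨1/2, -(1/2), 0, 0⟩ with he3
  set S : Set ℍ[ℚ,1,-1] := {1, e1, e2, e3} with hS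
  set v : Fin 4 → ℍ[ℚ,1,-1] := ![1, e1, e2, e3] with hv
  have hrange : Set.range v = S := by
    ext x
    simp only [hv, hS, Matrix.range_cons, Matrix.range_empty, Set.mem_insert_iff,
      Set.mem_singleton_iff, Set.union_empty, Set.union_singleton, Set.mem_union]
    tauto
  have hli : LinearIndependent ℚ v := by
    rw [Fintype.linearIndependent_iff]
    intro g hg
    simp [Fin.sum_univ_four, hv, he1, he2, he3, QuaternionAlgebra.ext_iff] at hg
    obtain ⟨h1, h2, h3, h4⟩ := hg
    have hg2 : g 2 = 0 := by
      rcases mul_eq_zero.mp (show g 2 * (N : ℚ) = 0 by linarith) with h | h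
      · exact h
      · exact absurd h hNQ
    have hg1 : g 1 = 0 := by
      rw [hg2] at h3; linarith
    have hg0 : g 0 = 0 := by linarith
    intro i
    fin_cases i
    · exact hg0
    · exact hg1
    · exact hg2
    · exact h2
  have hliZ : LinearIndependent ℤ v :=
    hli.restrict_scalars (fun a b h => by
      simpa [zsmul_eq_mul] using h)
  -- membership of generators
  have m0 : (1 : ℍ[ℚ,1,-1]) ∈ Submodule.span ℤ S := Submodule.subset_span (by simp [hS])
  have m1 : e1 ∈ Submodule.span ℤ S := Submodule.subset_span (by simp [hS])
  have m2 : e2 ∈ Submodule.span ℤ S := Submodule.subset_span (by simp [hS])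
  have m3 : e3 ∈ Submodule.span ℤ S := Submodule.subset_span (by simp [hS])
  -- multiplication table
  have h11 : e1 * e1 = 0 := by
    ext <;> simp [he1, QuaternionAlgebra.re_mul, QuaternionAlgebra.imI_mul,
      QuaternionAlgebra.imJ_mul, QuaternionAlgebra.imK_mul] <;> ring
  have h12 : e1 * e2 = (N : ℤ) • (1 : ℍ[ℚ,1,-1]) - (N : ℤ) • e3 := by
    ext <;> simp [he1, he2, he3, QuaternionAlgebra.re_mul, QuaternionAlgebra.imI_mul,
      QuaternionAlgebra.imJ_mul, QuaternionAlgebra.imK_mul] <;> ring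
  have h13 : e1 * e3 = e1 := by
    ext <;> simp [he1, he3, QuaternionAlgebra.re_mul, QuaternionAlgebra.imI_mul,
      QuaternionAlgebra.imJ_mul, QuaternionAlgebra.imK_mul] <;> ring
  have h21 : e2 * e1 = (N : ℤ) • e3 := by
    ext <;> simp [he1, he2, he3, QuaternionAlgebra.re_mul, QuaternionAlgebra.imI_mul,
      QuaternionAlgebra.imJ_mul, QuaternionAlgebra.imK_mul] <;> ring
  have h22 : e2 * e2 = 0 := by
    ext <;> simp [he2, QuaternionAlgebra.re_mul, QuaternionAlgebra.imI_mul,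
      QuaternionAlgebra.imJ_mul, QuaternionAlgebra.imK_mul] <;> ring
  have h23 : e2 * e3 = 0 := by
    ext <;> simp [he2, he3, QuaternionAlgebra.re_mul, QuaternionAlgebra.imI_mul,
      QuaternionAlgebra.imJ_mul, QuaternionAlgebra.imK_mul] <;> ring
  have h31 : e3 * e1 = 0 := by
    ext <;> simp [he1, he3, QuaternionAlgebra.re_mul, QuaternionAlgebra.imI_mul,
      QuaternionAlgebra.imJ_mul, QuaternionAlgebra.imK_mul] <;> ring
  have h32 : e3 * e2 = e2 := by
    ext <;> simp [he2, he3, QuaternionAlgebra.re_mul, QuaternionAlgebra.imI_mul,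
      QuaternionAlgebra.imJ_mul, QuaternionAlgebra.imK_mul] <;> ring
  have h33 : e3 * e3 = e3 := by
    ext <;> simp [he3, QuaternionAlgebra.re_mul, QuaternionAlgebra.imI_mul,
      QuaternionAlgebra.imJ_mul, QuaternionAlgebra.imK_mul] <;> ring
  -- closure under multiplication
  have hmul : ∀ x ∈ M, ∀ y ∈ M, x * y ∈ M := by
    rw [hM]
    intro x hx y hy
    induction hx, hy using Submodule.span_induction₂ with
    | mem_mem a b ha hb =>
      simp only [hS, Set.mem_insert_iff, Set.mem_singleton_iff] at ha hb
      rcases ha with rfl | rfl | rfl | rfl <;> rcases hb with rfl | rfl | rfl | rfl <;>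
        simp only [one_mul, mul_one, h11, h12, h13, h21, h22, h23, h31, h32, h33] <;>
        first
          | exact m0
          | exact m1
          | exact m2
          | exact m3
          | exact Submodule.zero_mem _
          | exact sub_mem (Submodule.smul_mem _ _ m0) (Submodule.smul_mem _ _ m3)
          | exact Submodule.smul_mem _ _ m3
    | zero_left y hy => rw [zero_mul]; exact Submodule.zero_mem _
    | zero_right x hx => rw [mul_zero]; exact Submodule.zero_mem _
    | add_left x y z hx hy hz hxz hyz => simpa [add_mul] using add_mem hxz hyz
    | add_right x y z hx hy hz hxy hxz => simpa [mul_add] using add_mem hxy hxz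
    | smul_left r x y hx hy hxy => rw [smul_mul_assoc]; exact Submodule.smul_mem _ r hxy
    | smul_right r x y hx hy hxy => rw [mul_smul_comm]; exact Submodule.smul_mem _ r hxy
  have hMv : M = Submodule.span ℤ (Set.range v) := by rw [hM, hrange]
  -- free of rank 4
  have hbasis : Module.Basis (Fin 4) ℤ (Submodule.span ℤ (Set.range v)) := Module.Basis.span hliZ
  have hfree : Module.Free ℤ M := by rw [hMv]; exact Module.Free.of_basis hbasis
  have hrank : Module.finrank ℤ M = 4 := by
    rw [hMv]
    rw [Module.finrank_eq_card_basis hbasis, Fintype.card_fin]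
  -- rational span is everything
  have htop : Submodule.span ℚ (M : Set ℍ[ℚ,1,-1]) = ⊤ := by
    rw [eq_top_iff]
    have hvtop : Submodule.span ℚ (Set.range v) = ⊤ := by
      apply LinearIndependent.span_eq_top_of_card_eq_finrank hli
      simp [QuaternionAlgebra.finrank_eq_four]
    rw [← hvtop]
    apply Submodule.span_mono
    rw [hrange]
    intro z hz
    simp only [hS, Set.mem_insert_iff, Set.mem_singleton_iff] at hz
    rcases hz with rfl | rfl | rfl | rfl
    · exact hM ▸ m0
    · exact hM ▸ m1
    · exact hM ▸ m2
    · exact hM ▸ m3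
  exact ⟨hM ▸ m0, hmul, hfree, hrank, htop⟩
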